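/- The map 𝔾 is μ-invariant: for every continuous function f on [0,1], ∫_0^1 𝔾(f)(θ) dμ(θ) = ∫_0^1 f(θ) dμ(θ). -/

import Mathlib

open MeasureTheory
open scoped NNReal ENNReal

/-- Gauss measure on `[0,1]`: `dμ = dθ / (ln 2 · (1 + θ))`. -/
noncomputable def gaussMeasure : Measure ℝ :=
  (volume.restrict (Set.Icc (0 : ℝ) 1)).withDensity
    (fun θ => ENNReal.ofReal (1 / (Real.log 2 * (1 + θ))))

/-- The Gauss (Perron–Frobenius) operator
`𝔾(f)(θ) = Σ_{s=1}^∞ f(1/(θ+s)) · (1+θ)/((θ+s)(θ+s+1))`;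
the summation index `n : ℕ` corresponds to `s = n + 1`. -/
noncomputable def gaussOp (f : ℝ → ℝ) (θ : ℝ) : ℝ :=
  ∑' n : ℕ, f (1 / (θ + (n : ℝ) + 1)) *
    ((1 + θ) / ((θ + (n : ℝ) + 1) * (θ + (n : ℝ) + 2)))

open Set Filter intervalIntegral in
/-- Conversion: integral against `gaussMeasure` as a set integral. -/
lemma gaussMeasure_integral_eq (g : ℝ → ℝ) :
    ∫ θ, g θ ∂gaussMeasure
      = ∫ θ in Ioc (0:ℝ) 1, (1 / (Real.log 2 * (1 + θ))) * g θ := by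
  have hc : (0:ℝ) < Real.log 2 := Real.log_pos one_lt_two
  have hmeas : Measurable fun θ : ℝ => Real.toNNReal (1 / (Real.log 2 * (1 + θ))) := by
    fun_prop
  rw [gaussMeasure]
  rw [show (fun θ : ℝ => ENNReal.ofReal (1 / (Real.log 2 * (1 + θ))))
      = (fun θ : ℝ => ((Real.toNNReal (1 / (Real.log 2 * (1 + θ))) : ℝ≥0) : ℝ≥0∞)) from rfl]
  rw [integral_withDensity_eq_integral_smul hmeas]
  rw [← integral_Icc_eq_integral_Ioc]
  refine setIntegral_congr_fun measurableSet_Icc (fun θ hθ => ?_)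
  have h1 : (0:ℝ) ≤ 1 / (Real.log 2 * (1 + θ)) := by
    have : (0:ℝ) < 1 + θ := by linarith [hθ.1]
    positivity
  rw [NNReal.smul_def, Real.coe_toNNReal _ h1]
  simp [smul_eq_mul]

open Set Filter intervalIntegral in
/-- `𝔾` is `μ`-invariant: for every continuous `f` on `[0,1]`,
`∫ 𝔾(f) dμ = ∫ f dμ`. -/
theorem gaussOp_mu_invariant (f : ℝ → ℝ)
    (hf : ContinuousOn f (Set.Icc (0 : ℝ) 1)) :
    ∫ θ, gaussOp f θ ∂gaussMeasure = ∫ θ, f θ ∂gaussMeasure := by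
  have hc : (0:ℝ) < Real.log 2 := Real.log_pos one_lt_two
  set c := Real.log 2 with hcdef
  -- the density-weighted function
  set φ : ℝ → ℝ := fun t => (1 / (c * (1 + t))) * f t with hφdef
  have hφcont : ContinuousOn φ (Icc (0:ℝ) 1) := by
    apply ContinuousOn.mul ?_ hf
    apply ContinuousOn.div continuousOn_const
    · fun_prop
    · intro t ht
      have : (0:ℝ) < 1 + t := by linarith [ht.1]
      positivity
  -- the primitive
  set F : ℝ → ℝ := fun x => ∫ t in (0:ℝ)..x, φ t with hFdef
  -- the summands after cancelling (1+θ)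
  set G : ℕ → ℝ → ℝ := fun n θ =>
    (1 / (c * (θ + (n:ℝ) + 1) * (θ + (n:ℝ) + 2))) * f (1 / (θ + (n:ℝ) + 1)) with hGdef
  -- bound on f
  obtain ⟨M, hM⟩ : ∃ M, ∀ x ∈ Icc (0:ℝ) 1, ‖f x‖ ≤ M :=
    isCompact_Icc.exists_bound_of_continuousOn hf
  have hM0 : 0 ≤ M := le_trans (norm_nonneg _) (hM 0 (by constructor <;> norm_num))
  -- helper facts
  have hmem : ∀ (n : ℕ) (θ : ℝ), θ ∈ Icc (0:ℝ) 1 → 1 / (θ + (n:ℝ) + 1) ∈ Icc (0:ℝ) 1 := by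
    intro n θ hθ
    have h1 : (1:ℝ) ≤ θ + n + 1 := by
      have : (0:ℝ) ≤ (n:ℝ) := Nat.cast_nonneg n
      linarith [hθ.1]
    constructor
    · positivity
    · rw [div_le_one (by linarith)]; linarith
  have hGcont : ∀ n : ℕ, ContinuousOn (G n) (Icc (0:ℝ) 1) := by
    intro n
    apply ContinuousOn.mul
    · apply ContinuousOn.div continuousOn_const
      · fun_prop
      · intro θ hθ
        have h0 : (0:ℝ) ≤ (n:ℝ) := Nat.cast_nonneg n
        have h1 : (0:ℝ) < θ + n + 1 := by linarith [hθ.1]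
        have h2 : (0:ℝ) < θ + n + 2 := by linarith
        positivity
    · apply hf.comp
      · apply ContinuousOn.div continuousOn_const
        · fun_prop
        · intro θ hθ
          have h0 : (0:ℝ) ≤ (n:ℝ) := Nat.cast_nonneg n
          have : (0:ℝ) < θ + n + 1 := by linarith [hθ.1]
          positivity
      · intro θ hθ; exact hmem n θ hθ
  have hGbound : ∀ (n : ℕ) (θ : ℝ), θ ∈ Icc (0:ℝ) 1 →
      ‖G n θ‖ ≤ M / (c * ((n:ℝ) + 1) * ((n:ℝ) + 2)) := by
    intro n θ hθ
    have h0 : (0:ℝ) ≤ (n:ℝ) := Nat.cast_nonneg n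
    have h1 : (0:ℝ) < (n:ℝ) + 1 := by linarith
    have h2 : (0:ℝ) < (n:ℝ) + 2 := by linarith
    have h3 : (0:ℝ) < θ + n + 1 := by linarith [hθ.1]
    have h4 : (0:ℝ) < θ + n + 2 := by linarith [hθ.1]
    rw [hGdef]
    simp only [norm_mul]
    have hfb : ‖f (1 / (θ + (n:ℝ) + 1))‖ ≤ M := hM _ (hmem n θ hθ)
    have hcb : ‖(1 / (c * (θ + (n:ℝ) + 1) * (θ + (n:ℝ) + 2)))‖
        ≤ 1 / (c * ((n:ℝ) + 1) * ((n:ℝ) + 2)) := by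
      rw [Real.norm_eq_abs, abs_of_nonneg (by positivity)]
      apply div_le_div_of_nonneg_left one_pos.le (by positivity)
      apply mul_le_mul (mul_le_mul le_rfl (by linarith [hθ.1]) h1.le (by positivity))
        (by linarith [hθ.1]) h2.le (by positivity)
    calc ‖(1 / (c * (θ + (n:ℝ) + 1) * (θ + (n:ℝ) + 2)))‖ * ‖f (1 / (θ + (n:ℝ) + 1))‖
        ≤ (1 / (c * ((n:ℝ) + 1) * ((n:ℝ) + 2))) * M := by
          apply mul_le_mul hcb hfb (norm_nonneg _) (by positivity)
      _ = M / (c * ((n:ℝ) + 1) * ((n:ℝ) + 2)) := by ring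
  have hBsum : Summable (fun n : ℕ => M / (c * ((n:ℝ) + 1) * ((n:ℝ) + 2))) := by
    have h2 : Summable (fun n : ℕ => 1 / ((n:ℝ) + 1) ^ 2) := by
      have h3 : Summable (fun n : ℕ => 1 / ((n:ℝ)) ^ 2) :=
        Real.summable_one_div_nat_pow.mpr one_lt_two
      have := (summable_nat_add_iff 1).mpr h3
      simpa using this
    apply Summable.of_nonneg_of_le (fun n => by positivity)
      (fun n => ?_) (h2.mul_left (M / c))
    have h0 : (0:ℝ) ≤ (n:ℝ) := Nat.cast_nonneg n
    have heq : M / c * (1 / ((n:ℝ) + 1) ^ 2) = M / (c * (((n:ℝ)+1) ^ 2)) := by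
      rw [div_mul_div_comm, mul_one]
    rw [heq]
    apply div_le_div_of_nonneg_left hM0 (by positivity)
    nlinarith
  -- continuity of the primitive
  have hφint : IntegrableOn φ (Icc (0:ℝ) 1) volume :=
    hφcont.integrableOn_compact isCompact_Icc
  have hFcont : ContinuousOn F (Icc (0:ℝ) 1) := by
    have := continuousOn_primitive_interval (a := (0:ℝ)) (b := 1) (f := φ)
      (by rwa [Set.uIcc_of_le zero_le_one])
    rwa [Set.uIcc_of_le zero_le_one] at this
  -- each integral by change of variables / FTC
  have hGint : ∀ n : ℕ, ∫ θ in (0:ℝ)..1, G n θ = F (1 / ((n:ℝ) + 1)) - F (1 / ((n:ℝ) + 2)) := by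
    intro n
    have h0 : (0:ℝ) ≤ (n:ℝ) := Nat.cast_nonneg n
    set H : ℝ → ℝ := fun θ => -F (1 / (θ + (n:ℝ) + 1)) with hHdef
    have hgcont : ContinuousOn (fun θ : ℝ => 1 / (θ + (n:ℝ) + 1)) (Icc (0:ℝ) 1) := by
      apply ContinuousOn.div continuousOn_const
      · fun_prop
      · intro θ hθ
        have : (0:ℝ) < θ + n + 1 := by linarith [hθ.1]
        positivity
    have hHcont : ContinuousOn H (Icc (0:ℝ) 1) :=
      (hFcont.comp hgcont (fun θ hθ => hmem n θ hθ)).neg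
    have hderiv : ∀ θ ∈ Ioo (0:ℝ) 1, HasDerivAt H (G n θ) θ := by
      intro θ hθ
      have hθI : θ ∈ Icc (0:ℝ) 1 := Ioo_subset_Icc_self hθ
      have hx : (1:ℝ) < θ + n + 1 := by linarith [hθ.1]
      have hx0 : (0:ℝ) < θ + n + 1 := by linarith
      set u : ℝ := 1 / (θ + (n:ℝ) + 1) with hudef
      have hu0 : 0 < u := by rw [hudef]; exact one_div_pos.mpr hx0
      have hu1 : u < 1 := by
        rw [hudef, div_lt_one hx0]; linarith
      -- derivative of F at u
      have hFu : HasDerivAt F (φ u) u := by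
        apply intervalIntegral.integral_hasDerivAt_right
        · apply ContinuousOn.intervalIntegrable
          apply hφcont.mono
          rw [Set.uIcc_of_le hu0.le]
          exact Icc_subset_Icc le_rfl hu1.le
        · exact (hφcont.mono Ioo_subset_Icc_self).stronglyMeasurableAtFilter
            isOpen_Ioo _ ⟨hu0, hu1⟩
        · exact hφcont.continuousAt (Icc_mem_nhds hu0 hu1)
      -- derivative of the inner map
      have hgd : HasDerivAt (fun y : ℝ => 1 / (y + (n:ℝ) + 1))
          (-(1 / (θ + (n:ℝ) + 1) ^ 2)) θ := by
        have h := ((hasDerivAt_id θ).add_const ((n:ℝ) + 1)).inv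
          (by intro h'; nlinarith [hx0] : θ + ((n:ℝ) + 1) ≠ 0)
        have h2 : (fun y : ℝ => 1 / (y + (n:ℝ) + 1)) = fun y : ℝ => (y + ((n:ℝ) + 1))⁻¹ := by
          funext y; rw [one_div, add_assoc]
        rw [h2]
        refine h.congr_deriv (Eq.symm ?_)
        rw [add_assoc]
        field_simp
        rfl
      have hcomp := (hFu.comp θ hgd).neg
      refine hcomp.congr_deriv (Eq.symm ?_)
      rw [hGdef, hφdef]
      simp only
      have hne1 : θ + (n:ℝ) + 1 ≠ 0 := hx0.ne'
      have hne2 : θ + (n:ℝ) + 2 ≠ 0 := by intro h'; nlinarith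
      have hne3 : 1 + 1 / (θ + (n:ℝ) + 1) ≠ 0 := by
        have : 0 < 1 / (θ + (n:ℝ) + 1) := one_div_pos.mpr hx0
        intro h'; nlinarith
      rw [hudef]
      field_simp
      ring
    have hint : IntervalIntegrable (G n) volume 0 1 := by
      apply ContinuousOn.intervalIntegrable
      rw [Set.uIcc_of_le zero_le_one]
      exact hGcont n
    have := intervalIntegral.integral_eq_sub_of_hasDerivAt_of_le zero_le_one hHcont hderiv hint
    rw [this, hHdef]
    simp only
    rw [show (1:ℝ) + (n:ℝ) + 1 = (n:ℝ) + 2 by ring, show (0:ℝ) + (n:ℝ) + 1 = (n:ℝ) + 1 by ring]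
    ring
  -- Now assemble
  rw [gaussMeasure_integral_eq, gaussMeasure_integral_eq]
  -- RHS
  have hRHS : ∫ θ in Ioc (0:ℝ) 1, (1 / (c * (1 + θ))) * f θ = F 1 := by
    rw [hFdef]
    simp only
    rw [intervalIntegral.integral_of_le zero_le_one]
  rw [hRHS]
  -- LHS: rewrite integrand as a tsum
  have hLHS1 : ∫ θ in Ioc (0:ℝ) 1, (1 / (c * (1 + θ))) * gaussOp f θ
      = ∫ θ in Ioc (0:ℝ) 1, ∑' n : ℕ, G n θ := by
    refine setIntegral_congr_fun measurableSet_Ioc (fun θ hθ => ?_)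
    rw [gaussOp, ← tsum_mul_left]
    congr 1
    funext m
    have hθ0 : (0:ℝ) < θ := hθ.1
    have h0 : (0:ℝ) ≤ (m:ℝ) := Nat.cast_nonneg m
    have hne1 : θ + (m:ℝ) + 1 ≠ 0 := by intro h'; nlinarith
    have hne2 : θ + (m:ℝ) + 2 ≠ 0 := by intro h'; nlinarith
    have hne3 : (1:ℝ) + θ ≠ 0 := by intro h'; nlinarith
    rw [hGdef]
    simp only
    field_simp
  rw [hLHS1]
  -- swap integral and sum
  have hswap : ∫ θ in Ioc (0:ℝ) 1, ∑' n : ℕ, G n θ = ∑' n : ℕ, ∫ θ in Ioc (0:ℝ) 1, G n θ := by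
    apply integral_tsum
    · intro n
      exact ((hGcont n).mono Ioc_subset_Icc_self).aestronglyMeasurable measurableSet_Ioc
    · have hb : ∀ n : ℕ, ∫⁻ θ in Ioc (0:ℝ) 1, ‖G n θ‖₊ ∂volume
          ≤ ENNReal.ofReal (M / (c * ((n:ℝ) + 1) * ((n:ℝ) + 2))) := by
        intro n
        calc ∫⁻ θ in Ioc (0:ℝ) 1, ‖G n θ‖₊ ∂volume
            ≤ ∫⁻ _ in Ioc (0:ℝ) 1, ENNReal.ofReal (M / (c * ((n:ℝ) + 1) * ((n:ℝ) + 2))) ∂volume := by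
              apply lintegral_mono_ae
              rw [ae_restrict_iff' measurableSet_Ioc]
              refine Filter.Eventually.of_forall (fun θ hθ => ?_)
              rw [← enorm_eq_nnnorm, ← ofReal_norm]
              exact ENNReal.ofReal_le_ofReal (hGbound n θ (Ioc_subset_Icc_self hθ))
          _ = ENNReal.ofReal (M / (c * ((n:ℝ) + 1) * ((n:ℝ) + 2))) := by
              rw [lintegral_const, Measure.restrict_apply_univ, Real.volume_Ioc]
              norm_num
      apply ne_top_of_le_ne_top ?_ (ENNReal.tsum_le_tsum hb)
      rw [← ENNReal.ofReal_tsum_of_nonneg (fun n => by positivity) hBsum]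
      exact ENNReal.ofReal_ne_top
  rw [hswap]
  -- evaluate each integral and sum the telescoping series
  have hterm : ∀ n : ℕ, ∫ θ in Ioc (0:ℝ) 1, G n θ
      = F (1 / ((n:ℝ) + 1)) - F (1 / ((n:ℝ) + 2)) := by
    intro n
    rw [← intervalIntegral.integral_of_le zero_le_one]
    exact hGint n
  simp_rw [hterm]
  -- telescoping sum
  set b : ℕ → ℝ := fun n => F (1 / ((n:ℝ) + 1)) with hbdef
  have hbsucc : ∀ n : ℕ, F (1 / ((n:ℝ) + 2)) = b (n + 1) := by
    intro n
    rw [hbdef]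
    congr 1
    push_cast
    ring
  simp_rw [hbsucc]
  have hsummable : Summable (fun n : ℕ => b n - b (n + 1)) := by
    apply Summable.of_norm_bounded hBsum
    intro n
    have h1 : b n - b (n + 1) = ∫ θ in (0:ℝ)..1, G n θ := by
      rw [hGint n, hbsucc n]
    rw [h1]
    have h2 := intervalIntegral.norm_integral_le_of_norm_le_const
      (C := M / (c * ((n:ℝ) + 1) * ((n:ℝ) + 2))) (f := G n) (a := 0) (b := 1) ?_
    · simpa using h2
    · intro x hx
      rw [Set.uIoc_of_le zero_le_one] at hx
      exact hGbound n x (Ioc_subset_Icc_self hx)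
  have hblim : Filter.Tendsto b Filter.atTop (nhds 0) := by
    have hF0 : F 0 = 0 := intervalIntegral.integral_same
    have h1 : Filter.Tendsto (fun n : ℕ => 1 / ((n:ℝ) + 1)) Filter.atTop
        (nhdsWithin 0 (Icc (0:ℝ) 1)) := by
      rw [tendsto_nhdsWithin_iff]
      constructor
      · exact tendsto_one_div_add_atTop_nhds_zero_nat
      · refine Filter.Eventually.of_forall (fun n => ?_)
        have h0 : (0:ℝ) ≤ (n:ℝ) := Nat.cast_nonneg n
        constructor
        · positivity
        · rw [div_le_one (by linarith)]; linarith
    have h2 := (hFcont 0 ⟨le_rfl, zero_le_one⟩).tendsto.comp h1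
    rwa [hF0] at h2
  have hsum : HasSum (fun n : ℕ => b n - b (n + 1)) (b 0) := by
    have h1 := hsummable.hasSum
    have h2 := h1.tendsto_sum_nat
    have h3 : ∀ N : ℕ, ∑ i ∈ Finset.range N, (b i - b (i + 1)) = b 0 - b N := by
      intro N
      exact Finset.sum_range_sub' b N
    simp_rw [h3] at h2
    have h4 : Filter.Tendsto (fun N : ℕ => b 0 - b N) Filter.atTop (nhds (b 0 - 0)) :=
      Filter.Tendsto.sub tendsto_const_nhds hblim
    rw [sub_zero] at h4
    have h5 := tendsto_nhds_unique h2 h4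
    rwa [h5] at h1
  rw [hsum.tsum_eq, hbdef]
  norm_num
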